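/- arXiv:2001.04710 — 7 statements merged into one kernel-verified Lean document; each statement's English description precedes it below -/
import Mathlib

section
/- Let G be a simple graph on n vertices with adjacency matrix A over ℝ, let w be a vertex of degree 1 and u its unique neighbour. Then the nullity of the adjacency matrix of the induced subgraph G - u - w equals the nullity of A. -/
open scoped Classical
open Matrix

/-- Nullity of a real square matrix: dimension of its kernel. -/
noncomputable def nullity {m : Type*} [Fintype m] (A : Matrix m m ℝ) : ℕ :=
  Module.finrank ℝ (LinearMap.ker A.mulVecLin)


/-- Auxiliary extension map used in the pendant-vertex nullity theorem. -/
noncomputable def extMap {V : Type*} [Fintype V] [DecidableEq V]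
    (A : Matrix V V ℝ) (u w : V) :
    ({v : V // v ≠ u ∧ v ≠ w} → ℝ) →ₗ[ℝ] (V → ℝ) where
  toFun y v :=
    if h1 : v = u then 0
    else if h2 : v = w then -∑ s : {v : V // v ≠ u ∧ v ≠ w}, A u s.val * y s
    else y ⟨v, h1, h2⟩
  map_add' y z := by
    funext v
    simp only [Pi.add_apply]
    split_ifs with h1 h2
    · simp
    · rw [← neg_add, ← Finset.sum_add_distrib]
      congr 1
      exact Finset.sum_congr rfl fun s _ => by ring
    · rfl
  map_smul' c y := by
    funext v
    simp only [Pi.smul_apply, RingHom.id_apply, smul_eq_mul]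
    split_ifs with h1 h2
    · simp
    · rw [mul_neg, Finset.mul_sum]
      congr 1
      exact Finset.sum_congr rfl fun s _ => by ring
    · rfl

theorem extMap_apply_u {V : Type*} [Fintype V] [DecidableEq V]
    (A : Matrix V V ℝ) (u w : V) (y : {v : V // v ≠ u ∧ v ≠ w} → ℝ) :
    extMap A u w y u = 0 := dif_pos rfl

theorem extMap_apply_w {V : Type*} [Fintype V] [DecidableEq V]
    (A : Matrix V V ℝ) (u w : V) (huw : u ≠ w) (y : {v : V // v ≠ u ∧ v ≠ w} → ℝ) :
    extMap A u w y w = -∑ s : {v : V // v ≠ u ∧ v ≠ w}, A u s.val * y s := by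
  unfold extMap
  simp only [LinearMap.coe_mk, AddHom.coe_mk]
  rw [dif_neg (Ne.symm huw)]
  simp

theorem extMap_apply_s {V : Type*} [Fintype V] [DecidableEq V]
    (A : Matrix V V ℝ) (u w : V) (y : {v : V // v ≠ u ∧ v ≠ w} → ℝ)
    (s : {v : V // v ≠ u ∧ v ≠ w}) :
    extMap A u w y s.val = y s := by
  unfold extMap
  simp only [LinearMap.coe_mk, AddHom.coe_mk]
  rw [dif_neg s.2.1, dif_neg s.2.2]

/-- If `w` has degree 1 with unique neighbour `u`, then the nullity of the adjacency
matrix of the induced subgraph `G - u - w` equals the nullity of `A(G)`. -/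
theorem stmt_0 {V : Type*} [Fintype V] [DecidableEq V] (G : SimpleGraph V)
    [DecidableRel G.Adj] (u w : V) (hw : G.neighborSet w = {u}) :
    nullity ((G.adjMatrix ℝ).submatrix
        (Subtype.val : {v : V // v ≠ u ∧ v ≠ w} → V) Subtype.val)
      = nullity (G.adjMatrix ℝ) := by
  classical
  set A : Matrix V V ℝ := G.adjMatrix ℝ with hAdef
  set B : Matrix {v : V // v ≠ u ∧ v ≠ w} {v : V // v ≠ u ∧ v ≠ w} ℝ :=
    A.submatrix (Subtype.val) Subtype.val with hBdef
  have hadj : G.Adj w u := by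
    have : u ∈ G.neighborSet w := by rw [hw]; exact Set.mem_singleton u
    exact this
  have huw : u ≠ w := fun h => G.irrefl (h ▸ hadj)
  have hAwv : ∀ v, v ≠ u → A w v = 0 := by
    intro v hv
    simp only [hAdef, SimpleGraph.adjMatrix_apply, ite_eq_right_iff]
    intro h
    have : v ∈ G.neighborSet w := h
    rw [hw] at this
    exact absurd this hv
  have hAvw : ∀ v, v ≠ u → A v w = 0 := by
    intro v hv
    have := hAwv v hv
    simpa [hAdef, SimpleGraph.adjMatrix_apply, G.adj_comm] using this
  have hAuw : A u w = 1 := by simp [hAdef, hadj.symm]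
  have hAwu : A w u = 1 := by simp [hAdef, hadj]
  have hAuu : A u u = 0 := by simp [hAdef]
  have hAww : A w w = 0 := by simp [hAdef]
  -- sum splitting
  have hsplit : ∀ f : V → ℝ,
      (∑ v, f v) = f u + f w + ∑ s : {v : V // v ≠ u ∧ v ≠ w}, f s.val := by
    intro f
    have h2 : ∑ x ∈ Finset.univ.filter (fun v => v ≠ u ∧ v ≠ w), f x
        = ∑ s : {v : V // v ≠ u ∧ v ≠ w}, f s.val :=
      Finset.sum_subtype _ (fun v => by simp) f
    have h3 : Finset.univ.filter (fun v => ¬(v ≠ u ∧ v ≠ w)) = {u, w} := by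
      ext v
      simp only [Finset.mem_filter, Finset.mem_univ, true_and, Finset.mem_insert,
        Finset.mem_singleton, not_and_or, not_not]
    calc ∑ v, f v
        = (∑ v ∈ Finset.univ.filter (fun v => v ≠ u ∧ v ≠ w), f v)
          + ∑ v ∈ Finset.univ.filter (fun v => ¬(v ≠ u ∧ v ≠ w)), f v :=
          (Finset.sum_filter_add_sum_filter_not _ _ _).symm
      _ = f u + f w + ∑ s : {v : V // v ≠ u ∧ v ≠ w}, f s.val := by
          rw [h3, Finset.sum_pair huw, h2]; ring
  -- kernel membership characterizations
  have hmem : ∀ x : V → ℝ,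
      x ∈ LinearMap.ker A.mulVecLin ↔ ∀ v, ∑ t, A v t * x t = 0 := by
    intro x
    rw [LinearMap.mem_ker]
    constructor
    · intro h v
      have := congrFun h v
      simpa [Matrix.mulVecLin_apply, Matrix.mulVec, dotProduct] using this
    · intro h
      funext v
      simpa [Matrix.mulVecLin_apply, Matrix.mulVec, dotProduct] using h v
  have hBmem : ∀ y : {v : V // v ≠ u ∧ v ≠ w} → ℝ,
      y ∈ LinearMap.ker B.mulVecLin ↔
        ∀ s : {v : V // v ≠ u ∧ v ≠ w},
          ∑ t : {v : V // v ≠ u ∧ v ≠ w}, A s.val t.val * y t = 0 := by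
    intro y
    rw [LinearMap.mem_ker]
    constructor
    · intro h s
      have := congrFun h s
      simpa [hBdef, Matrix.mulVecLin_apply, Matrix.mulVec, dotProduct,
        Matrix.submatrix_apply] using this
    · intro h
      funext s
      simpa [hBdef, Matrix.mulVecLin_apply, Matrix.mulVec, dotProduct,
        Matrix.submatrix_apply] using h s
  -- kernel vectors vanish at u and are determined at w
  have hxu : ∀ x : V → ℝ, (∀ v, ∑ t, A v t * x t = 0) → x u = 0 := by
    intro x hx
    have h0 := hx w
    rw [hsplit] at h0
    have hz : ∑ s : {v : V // v ≠ u ∧ v ≠ w}, A w s.val * x s.val = 0 :=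
      Finset.sum_eq_zero (fun s _ => by rw [hAwv s.val s.2.1]; ring)
    rw [hAwu, hAww, hz] at h0
    linarith
  have hxw : ∀ x : V → ℝ, (∀ v, ∑ t, A v t * x t = 0) →
      x w = -∑ s : {v : V // v ≠ u ∧ v ≠ w}, A u s.val * x s.val := by
    intro x hx
    have h0 := hx u
    rw [hsplit] at h0
    rw [hAuu, hAuw] at h0
    linarith
  -- restriction map
  let R : (V → ℝ) →ₗ[ℝ] ({v : V // v ≠ u ∧ v ≠ w} → ℝ) :=
    LinearMap.funLeft ℝ ℝ Subtype.val
  -- extension map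
  let E := extMap A u w
  have hEu : ∀ y, E y u = 0 := fun y => extMap_apply_u A u w y
  have hEw : ∀ y, E y w = -∑ s : {v : V // v ≠ u ∧ v ≠ w}, A u s.val * y s :=
    fun y => extMap_apply_w A u w huw y
  have hEs : ∀ y (s : {v : V // v ≠ u ∧ v ≠ w}), E y s.val = y s :=
    fun y s => extMap_apply_s A u w y s
  have hRs : ∀ (x : V → ℝ) (s : {v : V // v ≠ u ∧ v ≠ w}), R x s = x s.val :=
    fun x s => rfl
  -- R maps ker A into ker B
  have hRmem : ∀ x ∈ LinearMap.ker A.mulVecLin, R x ∈ LinearMap.ker B.mulVecLin := by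
    intro x hx
    have hx' := (hmem x).1 hx
    rw [hBmem]
    intro s
    have h0 := hx' s.val
    rw [hsplit] at h0
    rw [hxu x hx', hAvw s.val s.2.1] at h0
    simp only [hRs]
    linarith
  -- E maps ker B into ker A
  have hEmem : ∀ y ∈ LinearMap.ker B.mulVecLin, E y ∈ LinearMap.ker A.mulVecLin := by
    intro y hy
    have hy' := (hBmem y).1 hy
    rw [hmem]
    intro v
    rw [hsplit]
    simp only [hEu, hEw, hEs]
    by_cases hvu : v = u
    · subst hvu
      rw [hAuu, hAuw]
      ring
    by_cases hvw : v = w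
    · rw [hvw, hAwu, hAww]
      have hz : ∑ s : {v : V // v ≠ u ∧ v ≠ w}, A w s.val * y s = 0 :=
        Finset.sum_eq_zero (fun s _ => by rw [hAwv s.val s.2.1]; ring)
      rw [hz]
      ring
    · rw [hAvw v hvu]
      have := hy' ⟨v, hvu, hvw⟩
      simp only [mul_zero, zero_mul, add_zero, zero_add, mul_zero]
      exact this
  -- build the linear equivalence of kernels
  let F1 : LinearMap.ker B.mulVecLin →ₗ[ℝ] LinearMap.ker A.mulVecLin :=
    LinearMap.codRestrict _ (E.comp (LinearMap.ker B.mulVecLin).subtype)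
      (fun y => hEmem y.1 y.2)
  let F2 : LinearMap.ker A.mulVecLin →ₗ[ℝ] LinearMap.ker B.mulVecLin :=
    LinearMap.codRestrict _ (R.comp (LinearMap.ker A.mulVecLin).subtype)
      (fun x => hRmem x.1 x.2)
  have hcomp1 : F1.comp F2 = LinearMap.id := by
    apply LinearMap.ext
    intro x
    apply Subtype.ext
    funext v
    show E (R x.1) v = x.1 v
    have hx' := (hmem x.1).1 x.2
    by_cases hvu : v = u
    · subst hvu; rw [hEu, hxu x.1 hx']
    by_cases hvw : v = w
    · subst hvw
      rw [hEw, hxw x.1 hx']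
      rfl
    · exact hEs (R x.1) ⟨v, hvu, hvw⟩
  have hcomp2 : F2.comp F1 = LinearMap.id := by
    apply LinearMap.ext
    intro y
    apply Subtype.ext
    funext s
    show R (E y.1) s = y.1 s
    rw [hRs, hEs]
  let equiv : LinearMap.ker B.mulVecLin ≃ₗ[ℝ] LinearMap.ker A.mulVecLin :=
    LinearEquiv.ofLinear F1 F2 hcomp1 hcomp2
  exact equiv.finrank_eq
end

section
/- Let G be a simple graph, w a vertex of degree 1 with unique neighbour u. Then for every vertex v of G - u - w, v is a core vertex of G - u - w if and only if v is a core vertex of G. (Equivalently: the restriction to V \ {u,w} gives a bijection between kernel vectors of A(G) and kernel vectors of A(G-u-w), preserving supports on the common vertices.) -/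
open scoped Classical
open Matrix

/-- If `w` has degree 1 with unique neighbour `u`, then a vertex of `G - u - w` is a
core vertex of `G - u - w` iff it is a core vertex of `G`. -/
theorem stmt_1 {V : Type*} [Fintype V] [DecidableEq V] (G : SimpleGraph V)
    [DecidableRel G.Adj] (u w : V) (hw : G.neighborSet w = {u}) :
    ∀ v : {v : V // v ≠ u ∧ v ≠ w},
      (∃ x : {v : V // v ≠ u ∧ v ≠ w} → ℝ,
          ((G.adjMatrix ℝ).submatrix
            (Subtype.val : {v : V // v ≠ u ∧ v ≠ w} → V) Subtype.val).mulVec x = 0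
            ∧ x v ≠ 0)
        ↔ (∃ x : V → ℝ, (G.adjMatrix ℝ).mulVec x = 0 ∧ x v.val ≠ 0) := by
  classical
  have hadj_wu : G.Adj w u := by
    have : u ∈ G.neighborSet w := by rw [hw]; exact Set.mem_singleton u
    exact this
  have hadj_w : ∀ v : V, G.Adj w v ↔ v = u := by
    intro v
    constructor
    · intro h
      have : v ∈ G.neighborSet w := h
      rwa [hw] at this
    · intro h
      rw [h]
      exact hadj_wu
  have hu_ne_w : u ≠ w := by
    intro h; subst h; exact G.loopless.irrefl _ hadj_wu
  have hAw : ∀ v : V, v ≠ u → G.adjMatrix ℝ v w = 0 := by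
    intro v hv
    rw [SimpleGraph.adjMatrix_apply, if_neg]
    intro h
    exact hv ((hadj_w v).1 h.symm)
  have hAww : G.adjMatrix ℝ w w = 0 := by
    rw [SimpleGraph.adjMatrix_apply, if_neg (G.loopless.irrefl w)]
  have hAuw : G.adjMatrix ℝ u w = 1 := by
    rw [SimpleGraph.adjMatrix_apply, if_pos hadj_wu.symm]
  have hAwsub : ∀ j : {v : V // v ≠ u ∧ v ≠ w}, G.adjMatrix ℝ w j.val = 0 := by
    intro j
    rw [SimpleGraph.adjMatrix_apply, if_neg]
    intro h
    exact j.prop.1 ((hadj_w j.val).1 h)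
  -- sum splitting
  have hfilter : ∀ a : V, a ∈ Finset.univ.filter (fun v => v ≠ u ∧ v ≠ w) ↔
      (a ≠ u ∧ a ≠ w) := by
    intro a; simp
  have hsum : ∀ f : V → ℝ,
      ∑ j, f j = f u + f w + ∑ j : {v : V // v ≠ u ∧ v ≠ w}, f j.val := by
    intro f
    have hsub : ∑ j : {v : V // v ≠ u ∧ v ≠ w}, f j.val
        = ∑ j ∈ Finset.univ.filter (fun v => v ≠ u ∧ v ≠ w), f j := by
      exact (Finset.sum_subtype _ hfilter f).symm
    have huniv : (Finset.univ : Finset V)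
        = insert u (insert w (Finset.univ.filter (fun v => v ≠ u ∧ v ≠ w))) := by
      ext a
      simp only [Finset.mem_univ, Finset.mem_insert, Finset.mem_filter, true_and, true_iff]
      by_cases h1 : a = u
      · exact Or.inl h1
      · by_cases h2 : a = w
        · exact Or.inr (Or.inl h2)
        · exact Or.inr (Or.inr ⟨h1, h2⟩)
    have h2 : ∑ j ∈ insert u (insert w (Finset.univ.filter (fun v => v ≠ u ∧ v ≠ w))), f j
        = f u + f w + ∑ j ∈ Finset.univ.filter (fun v => v ≠ u ∧ v ≠ w), f j := by
      rw [Finset.sum_insert, Finset.sum_insert]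
      · ring
      · simp
      · simp [hu_ne_w]
    rw [hsub]
    rw [← h2, ← huniv]
  intro v
  constructor
  · rintro ⟨x', hx', hxv⟩
    set xw : ℝ := -(∑ j : {v : V // v ≠ u ∧ v ≠ w}, G.adjMatrix ℝ u j.val * x' j) with hxw
    refine ⟨fun a => if h : a ≠ u ∧ a ≠ w then x' ⟨a, h⟩ else if a = w then xw else 0,
      ?_, ?_⟩
    · funext i
      have hxu : (if h : u ≠ u ∧ u ≠ w then x' ⟨u, h⟩ else if u = w then xw else 0) = 0 := by
        simp [hu_ne_w]
      have hxww : (if h : w ≠ u ∧ w ≠ w then x' ⟨w, h⟩ else if w = w then xw else 0) = xw := by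
        simp
      simp only [mulVec, dotProduct, Pi.zero_apply]
      rw [hsum]
      rw [hxu, hxww]
      have hsubval : ∀ j : {v : V // v ≠ u ∧ v ≠ w},
          (if h : j.val ≠ u ∧ j.val ≠ w then x' ⟨j.val, h⟩ else if j.val = w then xw else 0)
          = x' j := by
        intro j; rw [dif_pos j.prop]
      by_cases hi1 : i = u
      · rw [hi1, hAuw]
        have : ∑ j : {v : V // v ≠ u ∧ v ≠ w}, G.adjMatrix ℝ u j.val *
            (if h : j.val ≠ u ∧ j.val ≠ w then x' ⟨j.val, h⟩ else if j.val = w then xw else 0)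
            = ∑ j : {v : V // v ≠ u ∧ v ≠ w}, G.adjMatrix ℝ u j.val * x' j := by
          refine Finset.sum_congr rfl fun j _ => ?_
          rw [hsubval j]
        rw [this, hxw]
        ring
      · by_cases hi2 : i = w
        · rw [hi2, hAww]
          have : ∑ j : {v : V // v ≠ u ∧ v ≠ w}, G.adjMatrix ℝ w j.val *
              (if h : j.val ≠ u ∧ j.val ≠ w then x' ⟨j.val, h⟩ else if j.val = w then xw else 0)
              = 0 := by
            refine Finset.sum_eq_zero fun j _ => ?_
            rw [hAwsub j, zero_mul]
          rw [this]
          ring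
        · rw [hAw i hi1]
          have hrow : ∑ j : {v : V // v ≠ u ∧ v ≠ w}, G.adjMatrix ℝ i j.val *
              (if h : j.val ≠ u ∧ j.val ≠ w then x' ⟨j.val, h⟩ else if j.val = w then xw else 0)
              = 0 := by
            have := congrFun hx' ⟨i, hi1, hi2⟩
            simp only [mulVec, dotProduct, submatrix_apply, Pi.zero_apply] at this
            calc _ = ∑ j : {v : V // v ≠ u ∧ v ≠ w}, G.adjMatrix ℝ i j.val * x' j := by
                  refine Finset.sum_congr rfl fun j _ => ?_
                  rw [hsubval j]
              _ = 0 := this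
          rw [hrow]
          ring
    · show (if h : v.val ≠ u ∧ v.val ≠ w then x' ⟨v.val, h⟩ else if v.val = w then xw else 0) ≠ 0
      rw [dif_pos v.prop]
      exact hxv
  · rintro ⟨x, hx, hxv⟩
    have hrow : ∀ i : V, ∑ j, G.adjMatrix ℝ i j * x j = 0 := by
      intro i
      have := congrFun hx i
      simpa [mulVec, dotProduct] using this
    have hxu : x u = 0 := by
      have h0 := hrow w
      rw [hsum (fun j => G.adjMatrix ℝ w j * x j)] at h0
      have hAwu : G.adjMatrix ℝ w u = 1 := by
        rw [SimpleGraph.adjMatrix_apply, if_pos hadj_wu]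
      have hz : ∑ j : {v : V // v ≠ u ∧ v ≠ w}, G.adjMatrix ℝ w j.val * x j.val = 0 :=
        Finset.sum_eq_zero fun j _ => by rw [hAwsub j, zero_mul]
      rw [hAwu, hAww, hz] at h0
      linarith
    refine ⟨fun j => x j.val, ?_, hxv⟩
    funext i
    simp only [mulVec, dotProduct, submatrix_apply, Pi.zero_apply]
    have := hrow i.val
    rw [hsum] at this
    rw [hAw i.val i.prop.1, hxu] at this
    simp only [mul_zero, zero_mul, zero_add] at this
    exact this
end

section
/- Every singular tree has independent core vertices: no two core vertices of a tree are adjacent. -/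
open scoped Classical
open Matrix

section Aux

variable {V : Type*} [Fintype V] [DecidableEq V]

/-- In a finite acyclic graph with at least one edge, there is a vertex with a unique
neighbor (a leaf). -/
lemma exists_leaf (G : SimpleGraph V) (hac : G.IsAcyclic) {a b : V} (hab : G.Adj a b) :
    ∃ ℓ p : V, G.Adj ℓ p ∧ ∀ w, G.Adj ℓ w → w = p := by
  haveI : Nonempty V := ⟨a⟩
  set Pred : ℕ → Prop := fun n => ∃ (u : V) (v : V) (q : G.Walk u v), q.IsPath ∧ q.length = n
    with hPred
  have pred1 : Pred 1 := ⟨a, b, (SimpleGraph.Path.singleton hab : G.Path a b).1,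
    (SimpleGraph.Path.singleton hab).2, rfl⟩
  have hcard : 1 ≤ Fintype.card V := Fintype.card_pos
  set N := Nat.findGreatest Pred (Fintype.card V) with hN
  have hN1 : 1 ≤ N := Nat.le_findGreatest hcard pred1
  have hNspec : Pred N := Nat.findGreatest_spec hcard pred1
  obtain ⟨u, v, q, hq, hlen⟩ := hNspec
  -- q is nonempty
  cases q with
  | nil => simp at hlen; omega
  | cons h' q' =>
    rename_i s
    refine ⟨u, s, h', fun w hw => ?_⟩
    by_cases hmem : w ∈ (SimpleGraph.Walk.cons h' q').support
    · -- use uniqueness of paths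
      have ht : ((SimpleGraph.Walk.cons h' q').takeUntil w hmem).IsPath := hq.takeUntil hmem
      have := hac.path_unique ⟨(SimpleGraph.Walk.cons h' q').takeUntil w hmem, ht⟩
        (SimpleGraph.Path.singleton hw)
      have ht2 : (SimpleGraph.Walk.cons h' q').takeUntil w hmem
          = SimpleGraph.Walk.cons hw SimpleGraph.Walk.nil := congrArg Subtype.val this
      have hspec := ((SimpleGraph.Walk.cons h' q')).take_spec hmem
      rw [ht2] at hspec
      -- hspec : (cons hw nil).append (dropUntil ...) = cons h' q'
      have hgv := congrArg (fun (z : G.Walk u v) => z.getVert 1) hspec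
      simpa [SimpleGraph.Walk.getVert] using hgv
    · -- extend the path, contradicting maximality
      exfalso
      have hpath : (SimpleGraph.Walk.cons hw.symm (SimpleGraph.Walk.cons h' q')).IsPath :=
        hq.cons hmem
      have hl2 : (SimpleGraph.Walk.cons hw.symm (SimpleGraph.Walk.cons h' q')).length = N + 1 := by
        simp [SimpleGraph.Walk.length_cons, hlen]
      have hlong : Pred (N + 1) := ⟨w, v, _, hpath, hl2⟩
      have hle : N + 1 ≤ Fintype.card V := by
        have := hpath.length_lt
        omega
      have : N + 1 ≤ N := Nat.le_findGreatest hle hlong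
      omega

/-- The graph obtained from `G` by deleting all edges touching `ℓ` or `p`. -/
def prune (G : SimpleGraph V) (ℓ p : V) : SimpleGraph V where
  Adj v w := G.Adj v w ∧ v ≠ ℓ ∧ v ≠ p ∧ w ≠ ℓ ∧ w ≠ p
  symm := ⟨fun v w (h : G.Adj v w ∧ v ≠ ℓ ∧ v ≠ p ∧ w ≠ ℓ ∧ w ≠ p) => ⟨h.1.symm, h.2.2.2.1, h.2.2.2.2, h.2.1, h.2.2.1⟩⟩
  loopless := ⟨fun v h => G.loopless.irrefl v h.1⟩

instance pruneDecidable (G : SimpleGraph V) [DecidableRel G.Adj] (ℓ p : V) :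
    DecidableRel (prune G ℓ p).Adj := fun v w =>
  inferInstanceAs (Decidable (G.Adj v w ∧ v ≠ ℓ ∧ v ≠ p ∧ w ≠ ℓ ∧ w ≠ p))

lemma prune_le (G : SimpleGraph V) (ℓ p : V) : prune G ℓ p ≤ G := fun _ _ h => h.1

lemma key : ∀ (n : ℕ) (G : SimpleGraph V) [DecidableRel G.Adj], G.edgeFinset.card ≤ n →
    G.IsAcyclic → ∀ (x y : V → ℝ) (a b : V), (G.adjMatrix ℝ).mulVec x = 0 →
    (G.adjMatrix ℝ).mulVec y = 0 → x a ≠ 0 → y b ≠ 0 → ¬ G.Adj a b := by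
  intro n
  induction n with
  | zero =>
    intro G _ hcard _ x y a b _ _ _ _ hadj
    have : s(a, b) ∈ G.edgeFinset := SimpleGraph.mem_edgeFinset.2 hadj
    have := Finset.card_pos.2 ⟨_, this⟩
    omega
  | succ n ih =>
    intro G _ hcard hac x y a b hx hy hxa hyb hadj
    obtain ⟨ℓ, p, hlp, huniq⟩ := exists_leaf G hac hadj
    have hnbr : G.neighborFinset ℓ = {p} := by
      ext w
      simp only [SimpleGraph.mem_neighborFinset, Finset.mem_singleton]
      exact ⟨fun h => huniq w h, fun h => h ▸ hlp⟩
    -- kernel equation at the leaf ℓ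
    have leafeq : ∀ z : V → ℝ, (G.adjMatrix ℝ).mulVec z = 0 → z p = 0 := by
      intro z hz
      have := congrFun hz ℓ
      rwa [SimpleGraph.adjMatrix_mulVec_apply, hnbr, Finset.sum_singleton, Pi.zero_apply] at this
    have hxp : x p = 0 := leafeq x hx
    have hyp : y p = 0 := leafeq y hy
    by_cases hla : ℓ = a
    · subst hla
      have : b = p := huniq b hadj
      exact hyb (this ▸ hyp)
    by_cases hlb : ℓ = b
    · subst hlb
      have : a = p := huniq a hadj.symm
      exact hxa (this ▸ hxp)
    by_cases hpa : p = a
    · exact hxa (hpa ▸ hxp)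
    by_cases hpb : p = b
    · exact hyb (hpb ▸ hyp)
    -- prune ℓ and p
    set G' := prune G ℓ p with hG'
    have hle : G' ≤ G := prune_le G ℓ p
    have hac' : G'.IsAcyclic := fun v c hc => hac (c.mapLe hle) (hc.mapLe hle)
    have hledge : G'.edgeFinset ⊆ G.edgeFinset := SimpleGraph.edgeFinset_mono hle
    have hmemG : s(ℓ, p) ∈ G.edgeFinset := SimpleGraph.mem_edgeFinset.2 hlp
    have hmemG' : s(ℓ, p) ∉ G'.edgeFinset := by
      intro hcontra
      have : G'.Adj ℓ p := SimpleGraph.mem_edgeFinset.1 hcontra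
      exact this.2.1 rfl
    have hcard' : G'.edgeFinset.card ≤ n := by
      have : G'.edgeFinset ⊂ G.edgeFinset := ⟨hledge, fun hsub => hmemG' (hsub hmemG)⟩
      have := Finset.card_lt_card this
      omega
    -- restricted kernel vectors
    have hres : ∀ z : V → ℝ, (G.adjMatrix ℝ).mulVec z = 0 → z p = 0 →
        (G'.adjMatrix ℝ).mulVec (fun v => if v = ℓ ∨ v = p then 0 else z v) = 0 := by
      intro z hz hzp
      funext c
      rw [SimpleGraph.adjMatrix_mulVec_apply, Pi.zero_apply]
      by_cases hc : c = ℓ ∨ c = p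
      · have : G'.neighborFinset c = ∅ := by
          apply Finset.eq_empty_of_forall_notMem
          intro w hw
          rw [SimpleGraph.mem_neighborFinset] at hw
          rcases hc with h | h
          · exact hw.2.1 h
          · exact hw.2.2.1 h
        rw [this, Finset.sum_empty]
      · push_neg at hc
        obtain ⟨hcl, hcp⟩ := hc
        have hnbr' : G'.neighborFinset c = (G.neighborFinset c).erase p := by
          ext w
          simp only [SimpleGraph.mem_neighborFinset, Finset.mem_erase]
          constructor
          · intro h; exact ⟨h.2.2.2.2, h.1⟩
          · intro ⟨hwp, hcw⟩
            have hwl : w ≠ ℓ := by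
              intro hwl
              subst hwl
              exact hcp (huniq c hcw.symm)
            exact ⟨hcw, hcl, hcp, hwl, hwp⟩
        rw [hnbr']
        have hsum : ∑ w ∈ (G.neighborFinset c).erase p,
            (if w = ℓ ∨ w = p then (0:ℝ) else z w) = ∑ w ∈ (G.neighborFinset c).erase p, z w := by
          apply Finset.sum_congr rfl
          intro w hw
          rw [Finset.mem_erase, SimpleGraph.mem_neighborFinset] at hw
          have hwl : w ≠ ℓ := by
            intro hwl
            subst hwl
            exact hcp (huniq c hw.2.symm)
          rw [if_neg (by tauto)]
        rw [hsum, Finset.sum_erase _ (by exact hzp)]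
        have := congrFun hz c
        rwa [SimpleGraph.adjMatrix_mulVec_apply, Pi.zero_apply] at this
    have hx' := hres x hx hxp
    have hy' := hres y hy hyp
    have hadj' : G'.Adj a b := ⟨hadj, Ne.symm hla, Ne.symm hpa, Ne.symm hlb, Ne.symm hpb⟩
    exact ih G' hcard' hac' _ _ a b hx' hy'
      (by simpa [Ne.symm hla, Ne.symm hpa] using hxa)
      (by simpa [Ne.symm hlb, Ne.symm hpb] using hyb) hadj'

end Aux

/-- A singular tree has independent core vertices: no two core vertices are adjacent. -/
theorem stmt_4 {V : Type*} [Fintype V] [DecidableEq V] (T : SimpleGraph V)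
    [DecidableRel T.Adj] (hT : T.IsTree)
    (hsing : ∃ x : V → ℝ, x ≠ 0 ∧ (T.adjMatrix ℝ).mulVec x = 0) :
    ∀ a b : V,
      (∃ x : V → ℝ, (T.adjMatrix ℝ).mulVec x = 0 ∧ x a ≠ 0) →
      (∃ x : V → ℝ, (T.adjMatrix ℝ).mulVec x = 0 ∧ x b ≠ 0) →
      ¬ T.Adj a b := by
  rintro a b ⟨x, hx, hxa⟩ ⟨y, hy, hyb⟩
  exact key T.edgeFinset.card T le_rfl hT.2 x y a b hx hy hxa hyb
end

section
/- Let G be a graph whose core vertex set CV is independent, with vertices labelled so that A = [[0, Q, 0],[Qᵀ, N, R],[0, Rᵀ, M]] in blocks indexed by CV, N(CV), and the remaining vertices. Then dim ker(Qᵀ) = dim ker(A). -/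
open scoped Classical
open Matrix

variable {V : Type*} [Fintype V] [DecidableEq V]

/-- The set of core vertices of `G`: vertices in the support of some kernel vector. -/
def coreSet (G : SimpleGraph V) [DecidableRel G.Adj] : Set V :=
  {v | ∃ x : V → ℝ, (G.adjMatrix ℝ).mulVec x = 0 ∧ x v ≠ 0}

/-- The neighbours of core vertices (which are core-forbidden when `coreSet` is
independent). -/
def nbhdSet (G : SimpleGraph V) [DecidableRel G.Adj] : Set V :=
  {v | v ∉ coreSet G ∧ ∃ u ∈ coreSet G, G.Adj u v}

/-- The remote core-forbidden vertices. -/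
def remoteSet (G : SimpleGraph V) [DecidableRel G.Adj] : Set V :=
  {v | v ∉ coreSet G ∧ v ∉ nbhdSet G}

/-- The `CV × N(CV)` submatrix `Q` of the adjacency matrix. -/
noncomputable def Qmat (G : SimpleGraph V) [DecidableRel G.Adj] :
    Matrix (coreSet G) (nbhdSet G) ℝ :=
  Matrix.of fun i j => (G.adjMatrix ℝ) i.val j.val

/-- For a singular graph with independent core vertices,
`dim ker Qᵀ = dim ker A`. -/
theorem stmt_5 (G : SimpleGraph V) [DecidableRel G.Adj]
    (hsing : ∃ x : V → ℝ, x ≠ 0 ∧ (G.adjMatrix ℝ).mulVec x = 0)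
    (hind : ∀ a b : V, a ∈ coreSet G → b ∈ coreSet G → ¬ G.Adj a b) :
    Module.finrank ℝ (LinearMap.ker ((Qmat G)ᵀ).mulVecLin)
      = nullity (G.adjMatrix ℝ) := by

  classical
  -- kernel vectors vanish off the core
  have key : ∀ x : V → ℝ, (G.adjMatrix ℝ).mulVec x = 0 →
      ∀ v, v ∉ coreSet G → x v = 0 := by
    intro x hx v hv
    by_contra h
    exact hv ⟨x, hx, h⟩
  -- sum identity: extension by zero
  have hsum : ∀ (y : ↥(coreSet G) → ℝ) (u : V),
      (∑ v : V, (G.adjMatrix ℝ) u v *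
        (if h : v ∈ coreSet G then y ⟨v, h⟩ else 0))
      = ∑ i : ↥(coreSet G), (G.adjMatrix ℝ) u i.1 * y i := by
    intro y u
    set g : V → ℝ := fun v => (G.adjMatrix ℝ) u v *
        (if h : v ∈ coreSet G then y ⟨v, h⟩ else 0) with hg
    have h1 : (∑ i : ↥(coreSet G), (G.adjMatrix ℝ) u i.1 * y i)
        = ∑ i ∈ (coreSet G).toFinset, g i := by
      rw [Finset.sum_subtype (coreSet G).toFinset (fun v => Set.mem_toFinset) g]
      apply Finset.sum_congr rfl
      intro i _
      simp [hg, i.2]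
    have h2 : (∑ i ∈ (coreSet G).toFinset, g i) = ∑ v : V, g v := by
      apply Finset.sum_subset (Finset.subset_univ _)
      intro v _ hv
      have : v ∉ coreSet G := by simpa [Set.mem_toFinset] using hv
      simp [hg, this]
    rw [h1, h2]
  -- forward: extension of kernel vector of Qᵀ lies in ker A
  have hfwd : ∀ y : ↥(coreSet G) → ℝ, ((Qmat G)ᵀ).mulVec y = 0 →
      (G.adjMatrix ℝ).mulVec (fun v => if h : v ∈ coreSet G then y ⟨v, h⟩ else 0) = 0 := by
    intro y hy
    funext u
    show (∑ v : V, (G.adjMatrix ℝ) u v *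
        (if h : v ∈ coreSet G then y ⟨v, h⟩ else 0)) = 0
    rw [hsum]
    by_cases hu : u ∈ coreSet G
    · apply Finset.sum_eq_zero
      intro i _
      have : ¬ G.Adj u i.1 := hind u i.1 hu i.2
      simp [this]
    · by_cases hn : u ∈ nbhdSet G
      · have := congrFun hy ⟨u, hn⟩
        simpa [Matrix.mulVec, dotProduct, Qmat, mul_comm,
          SimpleGraph.adjMatrix_apply, SimpleGraph.adj_comm] using this
      · apply Finset.sum_eq_zero
        intro i _
        have : ¬ G.Adj i.1 u := by
          intro hadj
          exact hn ⟨hu, i.1, i.2, hadj⟩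
        have : ¬ G.Adj u i.1 := fun h => this h.symm
        simp [this]
  -- backward: restriction of kernel vector of A lies in ker Qᵀ
  have hbwd : ∀ x : V → ℝ, (G.adjMatrix ℝ).mulVec x = 0 →
      ((Qmat G)ᵀ).mulVec (fun i => x i.1) = 0 := by
    intro x hx
    funext j
    have hx' : x = fun v => if h : v ∈ coreSet G then x v else 0 := by
      funext v
      by_cases h : v ∈ coreSet G <;> simp [h, key x hx v]
    have h0 := congrFun hx j.1
    show (∑ i : ↥(coreSet G), (Qmat G)ᵀ j i * x i.1) = 0
    have : (∑ i : ↥(coreSet G), (Qmat G)ᵀ j i * x i.1)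
        = ∑ i : ↥(coreSet G), (G.adjMatrix ℝ) j.1 i.1 * x i.1 := by
      apply Finset.sum_congr rfl
      intro i _
      simp [Qmat, SimpleGraph.adj_comm]
    rw [this]
    have hs := hsum (fun i => x i.1) j.1
    rw [← hs]
    have : (∑ v : V, (G.adjMatrix ℝ) j.1 v *
        (if h : v ∈ coreSet G then x v else 0))
        = ∑ v : V, (G.adjMatrix ℝ) j.1 v * x v := by
      apply Finset.sum_congr rfl
      intro v _
      by_cases h : v ∈ coreSet G <;> simp [h, key x hx v]
    rw [this]
    simpa [Matrix.mulVec, dotProduct] using h0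
  let e : (LinearMap.ker ((Qmat G)ᵀ).mulVecLin) ≃ₗ[ℝ]
      (LinearMap.ker (G.adjMatrix ℝ).mulVecLin) :=
    { toFun := fun y => ⟨fun v => if h : v ∈ coreSet G then y.1 ⟨v, h⟩ else 0, by
        have hy : ((Qmat G)ᵀ).mulVec y.1 = 0 := y.2
        simpa [LinearMap.mem_ker, Matrix.mulVecLin_apply] using hfwd y.1 hy⟩
      invFun := fun x => ⟨fun i => x.1 i.1, by
        have hx : (G.adjMatrix ℝ).mulVec x.1 = 0 := x.2
        simpa [LinearMap.mem_ker, Matrix.mulVecLin_apply, Matrix.mulVec_transpose]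
          using hbwd x.1 hx⟩
      map_add' := by
        intro y z
        apply Subtype.ext
        funext v
        by_cases h : v ∈ coreSet G <;> simp [h]
      map_smul' := by
        intro c y
        apply Subtype.ext
        funext v
        by_cases h : v ∈ coreSet G <;> simp [h]
      left_inv := by
        intro y
        apply Subtype.ext
        funext i
        simp [i.2]
      right_inv := by
        intro x
        apply Subtype.ext
        funext v
        have hx : (G.adjMatrix ℝ).mulVec x.1 = 0 := x.2
        by_cases h : v ∈ coreSet G <;> simp [h, key x.1 hx v] }
  exact e.finrank_eq
end

section
/- Let G be a singular graph with independent core vertices, A its adjacency matrix in core-labelled block form with submatrix Q (CV × N(CV)). Then η(G) = |CV| - rank(Q). -/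
open scoped Classical
open Matrix

variable {V : Type*} [Fintype V] [DecidableEq V]

/-- For a singular graph with independent core vertices,
`η(G) = |CV| - rank Q`. -/
theorem stmt_7 (G : SimpleGraph V) [DecidableRel G.Adj]
    (hsing : ∃ x : V → ℝ, x ≠ 0 ∧ (G.adjMatrix ℝ).mulVec x = 0)
    (hind : ∀ a b : V, a ∈ coreSet G → b ∈ coreSet G → ¬ G.Adj a b) :
    nullity (G.adjMatrix ℝ) = Fintype.card (coreSet G) - (Qmat G).rank := by
  classical
  set A := G.adjMatrix ℝ with hA
  set Qt := (Qmat G)ᵀ with hQt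
  -- extension-by-zero linear map
  let e : ((coreSet G) → ℝ) →ₗ[ℝ] (V → ℝ) :=
    { toFun := fun y v => if h : v ∈ coreSet G then y ⟨v, h⟩ else 0
      map_add' := by
        intro y z; funext v; by_cases h : v ∈ coreSet G <;> simp [h]
      map_smul' := by
        intro c y; funext v; by_cases h : v ∈ coreSet G <;> simp [h] }
  have he_apply : ∀ (y : (coreSet G) → ℝ) (v : V),
      e y v = if h : v ∈ coreSet G then y ⟨v, h⟩ else 0 := fun _ _ => rfl
  have he_inj : Function.Injective e := by
    intro y z h
    funext i
    have := congrFun h i.val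
    simpa [he_apply, i.2] using this
  -- sums of functions vanishing off the core set
  have hsum : ∀ f : V → ℝ, (∀ v, v ∉ coreSet G → f v = 0) →
      ∑ v, f v = ∑ v : coreSet G, f v.val := by
    intro f hf
    rw [← Finset.sum_filter_of_ne (p := fun v => v ∈ coreSet G)
      (fun x _ hx => by by_contra h; exact hx (hf x h))]
    exact Finset.sum_subtype _ (by simp) f
  -- componentwise formula
  have hcomp : ∀ (y : (coreSet G) → ℝ) (v : V),
      A.mulVec (e y) v = ∑ u : coreSet G, A v u.val * y u := by
    intro y v
    rw [Matrix.mulVec, dotProduct,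
      hsum (fun u => A v u * e y u) (by
        intro u hu
        simp [he_apply, hu])]
    refine Finset.sum_congr rfl fun u _ => ?_
    simp [he_apply, u.2]
  -- key equivalence
  have key : ∀ y : (coreSet G) → ℝ,
      A.mulVec (e y) = 0 ↔ Qt.mulVec y = 0 := by
    intro y
    have hQtv : ∀ j : (nbhdSet G), Qt.mulVec y j = ∑ u : coreSet G, A j.val u.val * y u := by
      intro j
      rw [Matrix.mulVec, dotProduct]
      refine Finset.sum_congr rfl fun u _ => ?_
      have : G.Adj u.val j.val ↔ G.Adj j.val u.val := G.adj_comm _ _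
      simp [hQt, Qmat, hA, SimpleGraph.adjMatrix_apply, this]
    constructor
    · intro h
      funext j
      rw [hQtv j, ← hcomp y j.val, h]
      rfl
    · intro h
      funext v
      rw [hcomp y v]
      by_cases hv : v ∈ coreSet G
      · refine Finset.sum_eq_zero fun u _ => ?_
        have : ¬ G.Adj v u.val := hind v u.val hv u.2
        simp [hA, SimpleGraph.adjMatrix_apply, this]
      · by_cases hv2 : v ∈ nbhdSet G
        · rw [← hQtv ⟨v, hv2⟩, h]
          rfl
        · refine Finset.sum_eq_zero fun u _ => ?_
          have : ¬ G.Adj v u.val := by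
            intro hadj
            exact hv2 ⟨hv, u.val, u.2, hadj.symm⟩
          simp [hA, SimpleGraph.adjMatrix_apply, this]
  -- kernel identification
  have hker : LinearMap.ker A.mulVecLin
      = Submodule.map e (LinearMap.ker Qt.mulVecLin) := by
    ext x
    simp only [LinearMap.mem_ker, Submodule.mem_map, Matrix.mulVecLin_apply]
    constructor
    · intro hx
      have hx0 : ∀ v, v ∉ coreSet G → x v = 0 := by
        intro v hv
        by_contra h
        exact hv ⟨x, hx, h⟩
      have hex : e (fun i => x i.val) = x := by
        funext v
        by_cases h : v ∈ coreSet G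
        · simp [he_apply, h]
        · simp [he_apply, h, hx0 v h]
      exact ⟨fun i => x i.val, (key _).mp (by rw [hex]; exact hx), hex⟩
    · rintro ⟨y, hy, rfl⟩
      exact (key y).mpr hy
  have h1 : nullity A = Module.finrank ℝ (LinearMap.ker Qt.mulVecLin) := by
    rw [nullity, hker]
    exact ((Submodule.equivMapOfInjective e he_inj _).symm.finrank_eq)
  have h2 : Qt.rank + Module.finrank ℝ (LinearMap.ker Qt.mulVecLin)
      = Fintype.card (coreSet G) := by
    have := LinearMap.finrank_range_add_finrank_ker Qt.mulVecLin
    rwa [Module.finrank_fintype_fun_eq_card] at this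
  have h3 : Qt.rank = (Qmat G).rank := Matrix.rank_transpose _
  omega
end

section
/- Let G be a bipartite graph of nullity 1 with partite sets V₁ and V₂ where |V₁| > |V₂|. Then n = |V₁|+|V₂| is odd, |V₂| = (n-1)/2, |V₁| = |V₂| + 1, and every core vertex of G lies in V₁. -/
open scoped Classical
open Matrix

/-- For a bipartite graph of nullity 1 with `|V₁| > |V₂|`: the number of vertices is
odd, `|V₂| = (n-1)/2`, `|V₁| = |V₂| + 1`, and every core vertex lies in `V₁`. -/
theorem stmt_11 {V : Type*} [Fintype V] [DecidableEq V] (G : SimpleGraph V)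
    [DecidableRel G.Adj] (V₁ V₂ : Set V)
    (hdisj : Disjoint V₁ V₂) (hcover : V₁ ∪ V₂ = Set.univ)
    (hbip : ∀ a b : V, G.Adj a b → (a ∈ V₁ ∧ b ∈ V₂) ∨ (a ∈ V₂ ∧ b ∈ V₁))
    (hnull : nullity (G.adjMatrix ℝ) = 1)
    (hgt : V₂.ncard < V₁.ncard) :
    Odd (Fintype.card V)
      ∧ V₂.ncard = (Fintype.card V - 1) / 2
      ∧ V₁.ncard = V₂.ncard + 1
      ∧ ∀ v : V, (∃ x : V → ℝ, (G.adjMatrix ℝ).mulVec x = 0 ∧ x v ≠ 0) → v ∈ V₁ := by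
  classical
  set A : Matrix V V ℝ := G.adjMatrix ℝ with hA
  set n : ℕ := Fintype.card V with hn
  set n₁ : ℕ := V₁.ncard with hn₁
  set n₂ : ℕ := V₂.ncard with hn₂
  -- total count
  have hsum : n₁ + n₂ = n := by
    rw [hn₁, hn₂, ← Set.ncard_union_eq hdisj (Set.toFinite _) (Set.toFinite _), hcover,
      Set.ncard_univ, Nat.card_eq_fintype_card]
  -- evaluation map on V₂-coordinates
  set e₂ : (V → ℝ) →ₗ[ℝ] (↥V₂ → ℝ) := LinearMap.funLeft ℝ ℝ (Subtype.val : ↥V₂ → V) with he₂def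
  have he₂ : Function.Surjective e₂ :=
    LinearMap.funLeft_surjective_of_injective ℝ ℝ _ Subtype.val_injective
  set W : Submodule ℝ (V → ℝ) := LinearMap.ker e₂ with hWdef
  have hcard₂ : Module.finrank ℝ (↥V₂ → ℝ) = n₂ := by
    rw [Module.finrank_pi, hn₂, ← Nat.card_coe_set_eq, Nat.card_eq_fintype_card]
  have hWrank : Module.finrank ℝ W + n₂ = n := by
    have h := LinearMap.finrank_range_add_finrank_ker e₂
    rw [LinearMap.range_eq_top.mpr he₂, finrank_top, hcard₂] at h
    have hpi : Module.finrank ℝ (V → ℝ) = n := by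
      rw [Module.finrank_pi, hn]
    rw [hpi] at h
    rw [hWdef]
    omega
  -- the map ψ : W → (V₂ → ℝ)
  set ψ : W →ₗ[ℝ] (↥V₂ → ℝ) := e₂ ∘ₗ A.mulVecLin ∘ₗ W.subtype with hψdef
  -- kernel of ψ lands in the kernel of A
  have hker : ∀ x : W, ψ x = 0 → A.mulVecLin (x : V → ℝ) = 0 := by
    intro x hx
    have hx2 : ∀ w : V, w ∈ V₂ → (x : V → ℝ) w = 0 := by
      intro w hw
      have := x.2
      rw [LinearMap.mem_ker] at this
      have := congrFun this ⟨w, hw⟩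
      simpa [he₂def, LinearMap.funLeft_apply] using this
    funext v
    rcases (hcover ▸ Set.mem_univ v : v ∈ V₁ ∪ V₂) with hv | hv
    · -- v ∈ V₁ : all neighbors in V₂, where x vanishes
      show A.mulVec (x : V → ℝ) v = 0
      rw [Matrix.mulVec, dotProduct]
      apply Finset.sum_eq_zero
      intro w _
      by_cases hadj : G.Adj v w
      · rcases hbip v w hadj with ⟨_, hw₂⟩ | ⟨hv₂, _⟩
        · rw [hx2 w hw₂, mul_zero]
        · exact absurd hv₂ (Set.disjoint_left.mp hdisj hv)
      · simp [hA, hadj]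
    · -- v ∈ V₂ : this is the ψ condition
      have := congrFun hx ⟨v, hv⟩
      simpa [hψdef, he₂def, LinearMap.funLeft_apply] using this
  -- inclusion of ker ψ into ker A
  set K : Submodule ℝ (V → ℝ) := LinearMap.ker A.mulVecLin with hKdef
  have hKrank : Module.finrank ℝ K = 1 := hnull
  set f : ↥(LinearMap.ker ψ) →ₗ[ℝ] ↥K :=
    (W.subtype ∘ₗ (LinearMap.ker ψ).subtype).codRestrict K
      (fun x => by simpa [hKdef, LinearMap.mem_ker] using hker x.1 x.2) with hfdef
  have hfval : ∀ x : ↥(LinearMap.ker ψ), ((f x : V → ℝ)) = ((x : W) : V → ℝ) := by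
    intro x; rfl
  have hfinj : Function.Injective f := by
    intro a b hab
    have : ((a : W) : V → ℝ) = ((b : W) : V → ℝ) := by
      rw [← hfval, ← hfval, hab]
    exact Subtype.ext (Subtype.ext this)
  have hle : Module.finrank ℝ (LinearMap.ker ψ) ≤ 1 := by
    calc Module.finrank ℝ (LinearMap.ker ψ) ≤ Module.finrank ℝ K :=
          LinearMap.finrank_le_finrank_of_injective hfinj
      _ = 1 := hKrank
  -- rank-nullity for ψ
  have hrn := LinearMap.finrank_range_add_finrank_ker ψ
  have hrange : Module.finrank ℝ (LinearMap.range ψ) ≤ n₂ := by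
    calc Module.finrank ℝ (LinearMap.range ψ) ≤ Module.finrank ℝ (↥V₂ → ℝ) :=
          Submodule.finrank_le _
      _ = n₂ := hcard₂
  have hn₁le : n₁ ≤ n₂ + 1 := by omega
  have hn₁eq : n₁ = n₂ + 1 := by omega
  have hkerψ : 1 ≤ Module.finrank ℝ (LinearMap.ker ψ) := by omega
  -- get a nonzero kernel vector supported on V₁
  have : Nontrivial ↥(LinearMap.ker ψ) := Module.finrank_pos_iff.mp (by omega : 0 < Module.finrank ℝ (LinearMap.ker ψ))
  obtain ⟨y, hy0⟩ := exists_ne (0 : ↥(LinearMap.ker ψ))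
  set y' : ↥K := f y with hy'def
  have hy'0 : y' ≠ 0 := by
    intro h
    exact hy0 (hfinj (by rw [← hy'def, h, map_zero]))
  have hspan : Submodule.span ℝ {y'} = ⊤ :=
    (finrank_eq_one_iff_of_nonzero y' hy'0).mp hKrank
  -- y' vanishes on V₂
  have hy'V₂ : ∀ w : V, w ∈ V₂ → (y' : V → ℝ) w = 0 := by
    intro w hw
    have hyW := (y : W).2
    rw [LinearMap.mem_ker] at hyW
    have := congrFun hyW ⟨w, hw⟩
    simpa [he₂def, LinearMap.funLeft_apply, hy'def, hfval] using this
  -- main support claim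
  have hcore : ∀ v : V, (∃ x : V → ℝ, A.mulVec x = 0 ∧ x v ≠ 0) → v ∈ V₁ := by
    rintro v ⟨x, hx, hxv⟩
    have hxK : x ∈ K := by
      rw [hKdef, LinearMap.mem_ker, Matrix.mulVecLin_apply, hx]
    have hmem : (⟨x, hxK⟩ : ↥K) ∈ Submodule.span ℝ {y'} := hspan ▸ Submodule.mem_top
    obtain ⟨c, hc⟩ := Submodule.mem_span_singleton.mp hmem
    have hxeq : x = c • (y' : V → ℝ) := by
      have := congrArg (Subtype.val) hc
      exact this.symm
    rcases (hcover ▸ Set.mem_univ v : v ∈ V₁ ∪ V₂) with hv | hv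
    · exact hv
    · exfalso
      apply hxv
      rw [hxeq]
      simp [hy'V₂ v hv]
  refine ⟨?_, ?_, ?_, hcore⟩
  · exact ⟨n₂, by omega⟩
  · omega
  · omega
end

section
/- In a connected bipartite graph of nullity 1, all core vertices lie in one partite set; in particular the core vertex set is independent. -/
open scoped Classical
open Matrix

/-- In a connected bipartite graph of nullity 1, all core vertices lie in one partite
set; in particular the core vertex set is independent. -/
theorem stmt_12 {V : Type*} [Fintype V] [DecidableEq V] (G : SimpleGraph V)
    [DecidableRel G.Adj] (V₁ V₂ : Set V)
    (hconn : G.Connected)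
    (hdisj : Disjoint V₁ V₂) (hcover : V₁ ∪ V₂ = Set.univ)
    (hbip : ∀ a b : V, G.Adj a b → (a ∈ V₁ ∧ b ∈ V₂) ∨ (a ∈ V₂ ∧ b ∈ V₁))
    (hnull : nullity (G.adjMatrix ℝ) = 1) :
    ((∀ v : V, (∃ x : V → ℝ, (G.adjMatrix ℝ).mulVec x = 0 ∧ x v ≠ 0) → v ∈ V₁)
        ∨ (∀ v : V, (∃ x : V → ℝ, (G.adjMatrix ℝ).mulVec x = 0 ∧ x v ≠ 0) → v ∈ V₂))
      ∧ ∀ a b : V,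
          (∃ x : V → ℝ, (G.adjMatrix ℝ).mulVec x = 0 ∧ x a ≠ 0) →
          (∃ x : V → ℝ, (G.adjMatrix ℝ).mulVec x = 0 ∧ x b ≠ 0) →
          ¬ G.Adj a b := by
  set A := G.adjMatrix ℝ with hA
  -- obtain a generator of the kernel
  rw [nullity, finrank_eq_one_iff'] at hnull
  obtain ⟨⟨x₀, hx₀mem⟩, hv0, hgen⟩ := hnull
  have hx₀ : A.mulVec x₀ = 0 := by
    simpa [Matrix.mulVecLin_apply] using hx₀mem
  -- every kernel vector is a multiple of x₀, so core v ↔ x₀ v ≠ 0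
  have hcore : ∀ v : V, (∃ x : V → ℝ, A.mulVec x = 0 ∧ x v ≠ 0) → x₀ v ≠ 0 := by
    rintro v ⟨x, hx, hxv⟩
    have hxmem : x ∈ LinearMap.ker A.mulVecLin := by
      simpa [Matrix.mulVecLin_apply] using hx
    obtain ⟨c, hc⟩ := hgen ⟨x, hxmem⟩
    have : c • x₀ = x := congrArg Subtype.val hc
    intro h0
    apply hxv
    rw [← this]
    simp [h0]
  -- the V₁-restriction of x₀ is also in the kernel
  set x₁ : V → ℝ := fun u => if u ∈ V₁ then x₀ u else 0 with hx₁def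
  have hx₁ : A.mulVec x₁ = 0 := by
    funext v
    by_cases hv : v ∈ V₁
    · rw [hA, SimpleGraph.adjMatrix_mulVec_apply]
      apply Finset.sum_eq_zero
      intro u hu
      rw [SimpleGraph.mem_neighborFinset] at hu
      have hu2 : u ∈ V₂ := by
        rcases hbip v u hu with ⟨_, h⟩ | ⟨h, _⟩
        · exact h
        · exact absurd (hdisj.le_bot ⟨hv, h⟩) (by simp)
      have : u ∉ V₁ := fun h => (hdisj.le_bot ⟨h, hu2⟩).elim
      simp [hx₁def, this]
    · have hsum : ∑ u ∈ G.neighborFinset v, x₁ u = ∑ u ∈ G.neighborFinset v, x₀ u := by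
        apply Finset.sum_congr rfl
        intro u hu
        rw [SimpleGraph.mem_neighborFinset] at hu
        have hu1 : u ∈ V₁ := by
          rcases hbip v u hu with ⟨h, _⟩ | ⟨_, h⟩
          · exact absurd h hv
          · exact h
        simp [hx₁def, hu1]
      rw [hA, SimpleGraph.adjMatrix_mulVec_apply, hsum,
        ← SimpleGraph.adjMatrix_mulVec_apply, ← hA, hx₀]
  -- x₁ is a multiple of x₀
  have hx₁mem : x₁ ∈ LinearMap.ker A.mulVecLin := by
    simpa [Matrix.mulVecLin_apply] using hx₁
  obtain ⟨c, hc⟩ := hgen ⟨x₁, hx₁mem⟩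
  have hcval : ∀ u, c * x₀ u = x₁ u := by
    intro u
    have : c • x₀ = x₁ := congrArg Subtype.val hc
    exact congrFun this u
  -- support of x₀ lies in V₁ or V₂
  have hsupp : (∀ v, x₀ v ≠ 0 → v ∈ V₁) ∨ (∀ v, x₀ v ≠ 0 → v ∈ V₂) := by
    by_cases h1 : ∃ v₁ ∈ V₁, x₀ v₁ ≠ 0
    · obtain ⟨v₁, hv₁, hnz₁⟩ := h1
      have hc1 : c = 1 := by
        have h := hcval v₁
        rw [hx₁def] at h
        simp only [if_pos hv₁] at h
        exact mul_right_cancel₀ hnz₁ (by rw [one_mul]; exact h)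
      left
      intro v hvnz
      by_contra hv1
      have hv2 : v ∈ V₂ := (hcover ▸ Set.mem_univ v : v ∈ V₁ ∪ V₂).resolve_left hv1
      have := hcval v
      rw [hx₁def, hc1] at this
      have hv1' : v ∉ V₁ := hv1
      simp [hv1'] at this
      exact hvnz this
    · right
      intro v hvnz
      push_neg at h1
      have : v ∈ V₁ ∪ V₂ := hcover ▸ Set.mem_univ v
      rcases this with h | h
      · exact absurd hvnz (not_not.mpr (h1 v h))
      · exact h
  constructor
  · rcases hsupp with h | h
    · exact Or.inl fun v hv => h v (hcore v hv)
    · exact Or.inr fun v hv => h v (hcore v hv)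
  · intro a b ha hb hab
    have ha' := hcore a ha
    have hb' := hcore b hb
    rcases hsupp with h | h
    · rcases hbip a b hab with ⟨_, h2⟩ | ⟨h2, _⟩
      · exact (hdisj.le_bot ⟨h b hb', h2⟩).elim
      · exact (hdisj.le_bot ⟨h a ha', h2⟩).elim
    · rcases hbip a b hab with ⟨h2, _⟩ | ⟨_, h2⟩
      · exact (hdisj.le_bot ⟨h2, h a ha'⟩).elim
      · exact (hdisj.le_bot ⟨h2, h b hb'⟩).elim
end
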